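/- If φ : 2^V → ℝ is a function on subsets of a finite set V, then its UpMin transform χ, defined by χ(I) = min over K ⊇ I of φ(K), is nondecreasing (i.e., J ⊆ I implies χ(J) ≤ χ(I)). Moreover, if φ is submodular with φ(∅) = 0 and nonnegative, then χ is also submodular with χ(∅) = 0 and nonnegative. -/
import Mathlib


open Finset

/-- The UpMin transform of a function on subsets of a finite set `V`:
`UpMin φ I = min_{K ⊇ I} φ K`. -/
noncomputable def UpMin {V : Type*} [Fintype V] [DecidableEq V]
    (φ : Finset V → ℝ) (I : Finset V) : ℝ :=
  ((Finset.univ : Finset (Finset V)).filter fun K => I ⊆ K).inf'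
    ⟨Finset.univ, by simp⟩ φ

lemma upMin_le {V : Type*} [Fintype V] [DecidableEq V]
    (φ : Finset V → ℝ) {I K : Finset V} (h : I ⊆ K) : UpMin φ I ≤ φ K :=
  Finset.inf'_le _ (by simp [h])

lemma upMin_exists {V : Type*} [Fintype V] [DecidableEq V]
    (φ : Finset V → ℝ) (I : Finset V) : ∃ K, I ⊆ K ∧ UpMin φ I = φ K := by
  obtain ⟨K, hK, hEq⟩ := Finset.exists_mem_eq_inf'
    (s := (Finset.univ : Finset (Finset V)).filter fun K => I ⊆ K)
    ⟨Finset.univ, by simp⟩ φ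
  exact ⟨K, by simpa using hK, hEq⟩

/-- The UpMin transform is nondecreasing; and if `φ` is submodular (with `φ ∅ = 0`)
and nonnegative, then so is its UpMin transform. -/
theorem upMin_nondecreasing_and_submodular
    {V : Type*} [Fintype V] [DecidableEq V] [Nonempty V] (φ : Finset V → ℝ) :
    (∀ J I : Finset V, J ⊆ I → UpMin φ J ≤ UpMin φ I) ∧
    ((φ ∅ = 0 ∧
        (∀ I₁ I₂ : Finset V, φ (I₁ ∪ I₂) + φ (I₁ ∩ I₂) ≤ φ I₁ + φ I₂) ∧
        (∀ I : Finset V, 0 ≤ φ I)) →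
      (UpMin φ ∅ = 0 ∧
        (∀ I₁ I₂ : Finset V,
          UpMin φ (I₁ ∪ I₂) + UpMin φ (I₁ ∩ I₂) ≤ UpMin φ I₁ + UpMin φ I₂) ∧
        (∀ I : Finset V, 0 ≤ UpMin φ I))) := by
  constructor
  · intro J I hJI
    obtain ⟨K, hIK, hEq⟩ := upMin_exists φ I
    rw [hEq]
    exact upMin_le φ (hJI.trans hIK)
  · rintro ⟨h0, hsub, hnn⟩
    have hnn' : ∀ I : Finset V, 0 ≤ UpMin φ I := by
      intro I
      obtain ⟨K, _, hEq⟩ := upMin_exists φ I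
      rw [hEq]; exact hnn K
    refine ⟨le_antisymm (h0 ▸ upMin_le φ (Finset.empty_subset ∅)) (hnn' ∅), ?_, hnn'⟩
    intro I₁ I₂
    obtain ⟨K₁, h₁, e₁⟩ := upMin_exists φ I₁
    obtain ⟨K₂, h₂, e₂⟩ := upMin_exists φ I₂
    rw [e₁, e₂]
    calc UpMin φ (I₁ ∪ I₂) + UpMin φ (I₁ ∩ I₂) ≤ φ (K₁ ∪ K₂) + φ (K₁ ∩ K₂) := by
          gcongr
          · exact upMin_le φ (Finset.union_subset_union h₁ h₂)
          · exact upMin_le φ (Finset.inter_subset_inter h₁ h₂)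
      _ ≤ φ K₁ + φ K₂ := hsub K₁ K₂
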